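/- Let n ≥ 1, p ≥ 1, let A be a Schur stable real p×p matrix, and let w : V → ℝ where V = {0,…,p−1}. For each index tuple (i_1,…,i_n) ∈ V^n the series ∑_{l=0}^∞ ∑_{r∈V} w_r · (A^l)_{i_1 r} ⋯ (A^l)_{i_n r} converges absolutely, and its sum T(i_1,…,i_n) satisfies the order-n discrete Lyapunov recursion T(i_1,…,i_n) = ∑_{(j_1,…,j_n)∈V^n} (∏_{m=1}^n A_{i_m j_m}) · T(j_1,…,j_n) + Ω(i_1,…,i_n), where Ω(i_1,…,i_n) = w_{i_1} if i_1 = i_2 = ⋯ = i_n and Ω(i_1,…,i_n) = 0 otherwise. -/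

import Mathlib

open Matrix Filter
open scoped ENNReal NNReal

attribute [local instance] Matrix.linftyOpNormedAddCommGroup Matrix.linftyOpNormedRing
  Matrix.linftyOpNormedAlgebra Matrix.linftyOpNormedSpace

lemma entry_abs_le_linfty {p : ℕ} (M : Matrix (Fin p) (Fin p) ℂ) (i j : Fin p) :
    ‖M i j‖₊ ≤ ‖M‖₊ := by
  rw [Matrix.linfty_opNNNorm_def]
  calc ‖M i j‖₊ ≤ ∑ k, ‖M i k‖₊ :=
        Finset.single_le_sum (f := fun k => ‖M i k‖₊) (fun _ _ => zero_le) (Finset.mem_univ j)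
    _ ≤ _ := Finset.le_sup (f := fun i => ∑ k, ‖M i k‖₊) (Finset.mem_univ i)

lemma schur_bound {p : ℕ} (hp : 1 ≤ p) (A : Matrix (Fin p) (Fin p) ℝ)
    (hA : ∀ μ ∈ spectrum ℂ (A.map (algebraMap ℝ ℂ)), ‖μ‖ < 1) :
    ∃ c : ℝ, 0 ≤ c ∧ c < 1 ∧ ∀ᶠ l in atTop, ∀ i j : Fin p, |(A ^ l) i j| ≤ c ^ l := by
  haveI : Nonempty (Fin p) := ⟨⟨0, hp⟩⟩
  set B : Matrix (Fin p) (Fin p) ℂ := A.map (algebraMap ℝ ℂ) with hB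
  have h1 : spectralRadius ℂ B < 1 := by
    have := spectrum.spectralRadius_lt_of_forall_lt (a := B)
      (r := 1) (fun z hz => by simpa [← NNReal.coe_lt_coe, coe_nnnorm] using hA z hz)
    simpa using this
  obtain ⟨c, hc1, hc2⟩ := ENNReal.lt_iff_exists_nnreal_btwn.mp h1
  have h2 := spectrum.pow_nnnorm_pow_one_div_tendsto_nhds_spectralRadius B
  have hev : ∀ᶠ l : ℕ in atTop, (‖B ^ l‖₊ : ℝ≥0∞) ^ (1 / (l : ℝ)) < c :=
    h2.eventually_lt_const hc1
  refine ⟨c, c.coe_nonneg, by exact_mod_cast hc2, ?_⟩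
  filter_upwards [hev, eventually_ge_atTop 1] with l hl hl1 i j
  have hl0 : (l : ℝ) ≠ 0 := Nat.cast_ne_zero.mpr (by omega)
  have heq : ((‖B ^ l‖₊ : ℝ≥0∞) ^ (1 / (l : ℝ))) ^ (l : ℝ) = (‖B ^ l‖₊ : ℝ≥0∞) := by
    rw [← ENNReal.rpow_mul, one_div, inv_mul_cancel₀ hl0, ENNReal.rpow_one]
  have key : (‖B ^ l‖₊ : ℝ≥0∞) < (c : ℝ≥0∞) ^ (l : ℝ) := by
    rw [← heq]; exact ENNReal.rpow_lt_rpow hl (by positivity)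
  have key2 : ‖B ^ l‖₊ ≤ c ^ l := by
    rw [ENNReal.rpow_natCast, ← ENNReal.coe_pow, ENNReal.coe_lt_coe] at key
    exact key.le
  have hentry : ‖(B ^ l) i j‖₊ ≤ c ^ l := le_trans (entry_abs_le_linfty _ i j) key2
  have hBA : (B ^ l) i j = ((A ^ l) i j : ℂ) := by
    rw [hB, ← RingHom.mapMatrix_apply, ← map_pow, RingHom.mapMatrix_apply, Matrix.map_apply]
    rfl
  have : ‖((A ^ l) i j : ℂ)‖ ≤ (c : ℝ) ^ l := by
    rw [← hBA]; exact_mod_cast hentry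
  simpa [Complex.norm_real] using this

theorem stmt_1 (n p : ℕ) (hn : 1 ≤ n) (hp : 1 ≤ p)
    (A : Matrix (Fin p) (Fin p) ℝ)
    (hA : ∀ μ ∈ spectrum ℂ (A.map (algebraMap ℝ ℂ)), ‖μ‖ < 1)
    (w : Fin p → ℝ) (i : Fin n → Fin p) :
    Summable (fun l : ℕ => |∑ r : Fin p, w r * ∏ m : Fin n, (A ^ l) (i m) r|) ∧
    (∑' l : ℕ, ∑ r : Fin p, w r * ∏ m : Fin n, (A ^ l) (i m) r)
      = (∑ j : Fin n → Fin p, (∏ m : Fin n, A (i m) (j m)) *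
            ∑' l : ℕ, ∑ r : Fin p, w r * ∏ m : Fin n, (A ^ l) (j m) r)
        + (if ∀ m : Fin n, i m = i ⟨0, hn⟩ then w (i ⟨0, hn⟩) else 0) := by
  obtain ⟨c, hc0, hc1, hev⟩ := schur_bound hp A hA
  set f : (Fin n → Fin p) → ℕ → ℝ :=
    fun j l => ∑ r : Fin p, w r * ∏ m : Fin n, (A ^ l) (j m) r with hf
  -- absolute summability
  have habs : ∀ j : Fin n → Fin p, Summable (fun l => |f j l|) := by
    intro j
    apply Summable.of_norm_bounded_eventually_nat (g := fun l => (∑ r : Fin p, |w r|) * (c ^ n) ^ l)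
    · apply Summable.mul_left
      exact summable_geometric_of_lt_one (by positivity)
        (pow_lt_one₀ hc0 hc1 (by omega))
    · filter_upwards [hev] with l hl
      rw [Real.norm_eq_abs, abs_abs]
      calc |f j l| ≤ ∑ r : Fin p, |w r * ∏ m : Fin n, (A ^ l) (j m) r| :=
            Finset.abs_sum_le_sum_abs _ _
        _ ≤ ∑ r : Fin p, |w r| * (c ^ n) ^ l := by
            apply Finset.sum_le_sum
            intro r _
            rw [abs_mul]
            apply mul_le_mul_of_nonneg_left _ (abs_nonneg _)
            rw [Finset.abs_prod]
            calc (∏ m : Fin n, |(A ^ l) (j m) r|) ≤ ∏ _m : Fin n, c ^ l :=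
                  Finset.prod_le_prod (fun _ _ => abs_nonneg _) (fun m _ => hl (j m) r)
              _ = (c ^ n) ^ l := by rw [Finset.prod_const, Finset.card_univ, Fintype.card_fin,
                    ← pow_mul, ← pow_mul, Nat.mul_comm]
        _ = (∑ r : Fin p, |w r|) * (c ^ n) ^ l := by rw [Finset.sum_mul]
  have hsum : ∀ j : Fin n → Fin p, Summable (f j) := fun j => (habs j).of_abs
  refine ⟨habs i, ?_⟩
  -- the recursion for each step
  have hrec : ∀ (j : Fin n → Fin p) (l : ℕ),
      f j (l + 1) = ∑ k : Fin n → Fin p, (∏ m : Fin n, A (j m) (k m)) * f k l := by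
    intro j l
    have h1 : ∀ r : Fin p, (∏ m : Fin n, (A ^ (l + 1)) (j m) r)
        = ∑ k : Fin n → Fin p,
            (∏ m : Fin n, A (j m) (k m)) * ∏ m : Fin n, (A ^ l) (k m) r := by
      intro r
      have hstep : ∀ m : Fin n, (A ^ (l + 1)) (j m) r = ∑ s : Fin p, A (j m) s * (A ^ l) s r := by
        intro m; rw [pow_succ', Matrix.mul_apply]
      simp_rw [hstep]
      rw [Finset.prod_univ_sum]
      simp [Finset.prod_mul_distrib]
    simp only [hf, h1, Finset.mul_sum]
    rw [Finset.sum_comm]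
    refine Finset.sum_congr rfl fun k _ => ?_
    exact Finset.sum_congr rfl fun r _ => by ring
  -- value at l = 0
  have h0 : f i 0 = (if ∀ m : Fin n, i m = i ⟨0, hn⟩ then w (i ⟨0, hn⟩) else 0) := by
    have hone : ∀ r : Fin p, (∏ m : Fin n, (A ^ 0) (i m) r)
        = if ∀ m : Fin n, i m = r then (1 : ℝ) else 0 := by
      intro r
      simp only [pow_zero, Matrix.one_apply]
      rw [Finset.prod_boole]
      simp
    simp only [hf, hone, mul_ite, mul_one, mul_zero]
    by_cases h : ∀ m : Fin n, i m = i ⟨0, hn⟩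
    · rw [if_pos h]
      rw [Finset.sum_eq_single (i ⟨0, hn⟩)]
      · rw [if_pos h]
      · intro r _ hr
        rw [if_neg]
        intro hall
        exact hr ((hall ⟨0, hn⟩).symm)
      · simp
    · rw [if_neg h]
      apply Finset.sum_eq_zero
      intro r _
      rw [if_neg]
      intro hall
      exact h fun m => (hall m).trans (hall ⟨0, hn⟩).symm
  -- assemble
  have step1 : (∑' l : ℕ, f i l) = f i 0 + ∑' l : ℕ, f i (l + 1) := Summable.tsum_eq_zero_add (hsum i)
  have step2 : (∑' l : ℕ, f i (l + 1))
      = ∑ k : Fin n → Fin p, (∏ m : Fin n, A (i m) (k m)) * ∑' l : ℕ, f k l := by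
    calc (∑' l : ℕ, f i (l + 1))
        = ∑' l : ℕ, ∑ k : Fin n → Fin p, (∏ m : Fin n, A (i m) (k m)) * f k l := by
          simp_rw [hrec]
      _ = ∑ k : Fin n → Fin p, ∑' l : ℕ, (∏ m : Fin n, A (i m) (k m)) * f k l :=
          Summable.tsum_finsetSum fun k _ => (hsum k).mul_left _
      _ = ∑ k : Fin n → Fin p, (∏ m : Fin n, A (i m) (k m)) * ∑' l : ℕ, f k l := by
          simp_rw [tsum_mul_left]
  calc (∑' l : ℕ, f i l) = f i 0 + ∑' l : ℕ, f i (l + 1) := step1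
    _ = (∑ k : Fin n → Fin p, (∏ m : Fin n, A (i m) (k m)) * ∑' l : ℕ, f k l) + f i 0 := by
        rw [step2, add_comm]
    _ = _ := by rw [h0]
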